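/- Suppose V : ℤ → ℝ is a Gordon potential. Then the Schrödinger operator H on ℓ²(ℤ) given by [Hψ](n) = ψ(n+1) + ψ(n−1) + V(n)ψ(n) has empty point spectrum, i.e., there is no E ∈ ℝ and no nonzero ψ ∈ ℓ²(ℤ) with Hψ = Eψ. -/

import Mathlib

open Filter

open Matrix

abbrev M2 := Matrix (Fin 2) (Fin 2) ℝ

def Amat (t : ℝ) : M2 := !![t, -1; 1, 0]

def tmat (b : ℤ → ℝ) : ℕ → M2
  | 0 => 1
  | n+1 => Amat (b (n+1 : ℕ)) * tmat b n

/-- entrywise sup norm of a 2×2 matrix -/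
def Nm (M : M2) : ℝ := max (max |M 0 0| |M 0 1|) (max |M 1 0| |M 1 1|)

lemma Nm_nonneg (M : M2) : 0 ≤ Nm M := le_trans (abs_nonneg _) (le_max_of_le_left (le_max_left _ _))

lemma entry_le_Nm (M : M2) (i j : Fin 2) : |M i j| ≤ Nm M := by
  fin_cases i <;> fin_cases j <;> unfold Nm <;>
    simp only [Fin.zero_eta, Fin.mk_one, le_max_iff, le_refl, true_or, or_true]

lemma Nm_le {M : M2} {r : ℝ} (h : ∀ i j, |M i j| ≤ r) : Nm M ≤ r := by
  unfold Nm
  exact max_le (max_le (h 0 0) (h 0 1)) (max_le (h 1 0) (h 1 1))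

lemma Nm_one : Nm (1 : M2) = 1 := by
  unfold Nm
  norm_num [Matrix.one_apply]

lemma Nm_mul_le (M N : M2) : Nm (M * N) ≤ 2 * Nm M * Nm N := by
  apply Nm_le
  intro i j
  have h : (M * N) i j = M i 0 * N 0 j + M i 1 * N 1 j := by
    simp [Matrix.mul_apply, Fin.sum_univ_two]
  rw [h]
  calc |M i 0 * N 0 j + M i 1 * N 1 j| ≤ |M i 0 * N 0 j| + |M i 1 * N 1 j| := abs_add_le _ _
    _ = |M i 0| * |N 0 j| + |M i 1| * |N 1 j| := by rw [abs_mul, abs_mul]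
    _ ≤ Nm M * Nm N + Nm M * Nm N := by
        gcongr <;> first
          | exact entry_le_Nm _ _ _
          | exact Nm_nonneg _
          | exact abs_nonneg _
    _ = 2 * Nm M * Nm N := by ring


lemma Nm_add_le (M N : M2) : Nm (M + N) ≤ Nm M + Nm N := by
  apply Nm_le
  intro i j
  calc |(M + N) i j| = |M i j + N i j| := by simp
    _ ≤ |M i j| + |N i j| := abs_add_le _ _
    _ ≤ Nm M + Nm N := add_le_add (entry_le_Nm _ _ _) (entry_le_Nm _ _ _)

lemma Nm_Amat_le {t R : ℝ} (ht : |t| ≤ R) (hR : 1 ≤ R) : Nm (Amat t) ≤ R := by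
  apply Nm_le
  intro i j
  fin_cases i <;> fin_cases j <;> simp [Amat] <;> [exact ht; linarith; linarith; linarith]

lemma Nm_Amat_sub (s t : ℝ) : Nm (Amat s - Amat t) ≤ |s - t| := by
  apply Nm_le
  intro i j
  fin_cases i <;> fin_cases j <;> simp [Amat] <;> positivity

lemma det_Amat (t : ℝ) : (Amat t).det = 1 := by
  simp [Amat, Matrix.det_fin_two]

lemma det_tmat (b : ℤ → ℝ) (n : ℕ) : (tmat b n).det = 1 := by
  induction n with
  | zero => simp [tmat]
  | succ n ih => rw [tmat, Matrix.det_mul, det_Amat, ih, one_mul]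

lemma cayley (M : M2) : M * M = M.trace • M - M.det • 1 := by
  ext i j
  fin_cases i <;> fin_cases j <;>
    simp [Matrix.mul_apply, Fin.sum_univ_two, Matrix.trace_fin_two, Matrix.det_fin_two,
      Matrix.one_apply] <;> ring

lemma Nm_adjugate (M : M2) : Nm M.adjugate ≤ Nm M := by
  apply Nm_le
  intro i j
  rw [Matrix.adjugate_fin_two]
  fin_cases i <;> fin_cases j <;> simp <;> exact entry_le_Nm _ _ _

/-- sup norm of a vector in ℝ² -/
def Nv (u : Fin 2 → ℝ) : ℝ := max |u 0| |u 1|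

lemma Nv_nonneg (u : Fin 2 → ℝ) : 0 ≤ Nv u := le_max_of_le_left (abs_nonneg _)

lemma comp_le_Nv (u : Fin 2 → ℝ) (i : Fin 2) : |u i| ≤ Nv u := by
  fin_cases i
  · exact le_max_left _ _
  · exact le_max_right _ _

lemma mulVec_comp_le (M : M2) (u : Fin 2 → ℝ) (i : Fin 2) :
    |(M *ᵥ u) i| ≤ 2 * Nm M * Nv u := by
  have h : (M *ᵥ u) i = M i 0 * u 0 + M i 1 * u 1 := by
    simp [Matrix.mulVec, dotProduct, Fin.sum_univ_two]
  rw [h]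
  calc |M i 0 * u 0 + M i 1 * u 1| ≤ |M i 0| * |u 0| + |M i 1| * |u 1| := by
        refine (abs_add_le _ _).trans ?_
        rw [abs_mul, abs_mul]
    _ ≤ Nm M * Nv u + Nm M * Nv u := by
        gcongr <;> first | exact entry_le_Nm _ _ _ | exact comp_le_Nv _ _ | exact Nm_nonneg _ | exact abs_nonneg _
    _ = 2 * Nm M * Nv u := by ring

lemma Nv_mulVec_le (M : M2) (u : Fin 2 → ℝ) : Nv (M *ᵥ u) ≤ 2 * Nm M * Nv u :=
  max_le (mulVec_comp_le _ _ _) (mulVec_comp_le _ _ _)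


lemma Nm_tmat_le {b : ℤ → ℝ} {R : ℝ} (hR : 1 ≤ R) (n : ℕ)
    (hb : ∀ m : ℕ, 1 ≤ m → m ≤ n → |b m| ≤ R) :
    Nm (tmat b n) ≤ (2 * R) ^ n := by
  induction n with
  | zero => simp [tmat, Nm_one]
  | succ n ih =>
    have hb' : ∀ m : ℕ, 1 ≤ m → m ≤ n → |b m| ≤ R := fun m h1 h2 => hb m h1 (h2.trans n.le_succ)
    calc Nm (tmat b (n+1)) ≤ 2 * Nm (Amat (b (n+1 : ℕ))) * Nm (tmat b n) := Nm_mul_le _ _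
      _ ≤ 2 * R * (2 * R) ^ n := by
          have h1 : Nm (Amat (b (n+1 : ℕ))) ≤ R :=
            Nm_Amat_le (hb (n+1) (Nat.le_add_left _ _) le_rfl) hR
          have h2 := ih hb'
          have := Nm_nonneg (tmat b n)
          nlinarith
      _ = (2 * R) ^ (n + 1) := by ring

lemma tmat_congr {b c : ℤ → ℝ} (n : ℕ) (h : ∀ m : ℕ, 1 ≤ m → m ≤ n → b m = c m) :
    tmat b n = tmat c n := by
  induction n with
  | zero => rfl
  | succ n ih =>
    rw [tmat, tmat, h (n+1) (Nat.le_add_left _ _) le_rfl,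
      ih fun m h1 h2 => h m h1 (h2.trans n.le_succ)]

lemma tmat_add (b : ℤ → ℝ) (m n : ℕ) :
    tmat b (m + n) = tmat (fun j => b (j + (n : ℤ))) m * tmat b n := by
  induction m with
  | zero => simp [tmat]
  | succ m ih =>
    have : m + 1 + n = (m + n) + 1 := by ring
    rw [this, tmat, ih, tmat, ← mul_assoc]
    congr 2
    push_cast
    ring

lemma tmat_sub_le {b c : ℤ → ℝ} {R δ : ℝ} (hR : 1 ≤ R) (hδ : 0 ≤ δ) (n : ℕ)
    (hb : ∀ m : ℕ, 1 ≤ m → m ≤ n → |b m| ≤ R)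
    (hc : ∀ m : ℕ, 1 ≤ m → m ≤ n → |c m| ≤ R)
    (hbc : ∀ m : ℕ, 1 ≤ m → m ≤ n → |b m - c m| ≤ δ) :
    Nm (tmat b n - tmat c n) ≤ 2 * δ * n * (2 * R) ^ n := by
  induction n with
  | zero => simp [tmat, Nm, abs_of_nonneg]
  | succ n ih =>
    have hb' : ∀ m : ℕ, 1 ≤ m → m ≤ n → |b m| ≤ R := fun m h1 h2 => hb m h1 (h2.trans n.le_succ)
    have hc' : ∀ m : ℕ, 1 ≤ m → m ≤ n → |c m| ≤ R := fun m h1 h2 => hc m h1 (h2.trans n.le_succ)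
    have hbc' : ∀ m : ℕ, 1 ≤ m → m ≤ n → |b m - c m| ≤ δ :=
      fun m h1 h2 => hbc m h1 (h2.trans n.le_succ)
    have key : tmat b (n+1) - tmat c (n+1) =
        Amat (b (n+1 : ℕ)) * (tmat b n - tmat c n)
          + (Amat (b (n+1 : ℕ)) - Amat (c (n+1 : ℕ))) * tmat c n := by
      rw [tmat, tmat]; noncomm_ring
    have h1 : Nm (Amat (b (n+1 : ℕ)) * (tmat b n - tmat c n)) ≤
        2 * R * (2 * δ * n * (2 * R) ^ n) := by
      refine (Nm_mul_le _ _).trans ?_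
      have hA : Nm (Amat (b (n+1 : ℕ))) ≤ R := Nm_Amat_le (hb _ (Nat.le_add_left _ _) le_rfl) hR
      have hD := ih hb' hc' hbc'
      have := Nm_nonneg (tmat b n - tmat c n)
      nlinarith
    have h2 : Nm ((Amat (b (n+1 : ℕ)) - Amat (c (n+1 : ℕ))) * tmat c n) ≤
        2 * δ * (2 * R) ^ n := by
      refine (Nm_mul_le _ _).trans ?_
      have hA : Nm (Amat (b (n+1 : ℕ)) - Amat (c (n+1 : ℕ))) ≤ δ :=
        (Nm_Amat_sub _ _).trans (hbc _ (Nat.le_add_left _ _) le_rfl)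
      have hT := Nm_tmat_le hR n hc'
      have := Nm_nonneg (Amat (b (n+1 : ℕ)) - Amat (c (n+1 : ℕ)))
      have := Nm_nonneg (tmat c n)
      have h2R : (0:ℝ) < 2 * R := by linarith
      have hp : (0:ℝ) ≤ (2*R)^n := le_of_lt (pow_pos h2R n)
      nlinarith
    calc Nm (tmat b (n+1) - tmat c (n+1)) ≤ _ + _ := key ▸ Nm_add_le _ _
      _ ≤ 2 * R * (2 * δ * n * (2 * R) ^ n) + 2 * δ * (2 * R) ^ n := add_le_add h1 h2
      _ ≤ 2 * δ * ((n:ℝ) + 1) * (2 * R) ^ (n + 1) := by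
          have h2R : (2:ℝ) ≤ 2 * R := by linarith
          have hp : (0:ℝ) ≤ (2*R)^n := pow_nonneg (by linarith) n
          have hn : (0:ℝ) ≤ (n:ℝ) := Nat.cast_nonneg n
          have expand : (2 * R) ^ (n + 1) = 2 * R * (2 * R) ^ n := by ring
          rw [expand]
          nlinarith [mul_nonneg (mul_nonneg hδ hp) (show (0:ℝ) ≤ 2*R-1 by linarith)]
      _ = 2 * δ * ((n+1 : ℕ) : ℝ) * (2 * R) ^ (n + 1) := by norm_num

/-- the solution identity -/
lemma sol {b : ℤ → ℝ} {u : ℤ → Fin 2 → ℝ}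
    (hu : ∀ m : ℤ, u m = Amat (b m) *ᵥ u (m - 1)) (s : ℤ) (n : ℕ) :
    u (s + n) = tmat (fun j => b (j + s)) n *ᵥ u s := by
  induction n with
  | zero => simp [tmat]
  | succ n ih =>
    have h1 : s + ((n : ℤ) + 1) = (s + n) + 1 := by ring
    push_cast
    rw [h1, hu (s + n + 1), tmat, ← Matrix.mulVec_mulVec, add_sub_cancel_right, ih]
    congr 2
    push_cast
    ring


lemma Nm_neg (M : M2) : Nm (-M) = Nm M := by
  unfold Nm
  simp

lemma Amat_mulVec (t : ℝ) (v : Fin 2 → ℝ) : Amat t *ᵥ v = ![t * v 0 - v 1, v 0] := by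
  funext i
  fin_cases i <;>
    simp [Amat, Matrix.mulVec, dotProduct, Fin.sum_univ_two] <;> ring

lemma abs_le_abs_add_abs_sub' (a b : ℝ) : |a| ≤ |b| + |a - b| := by
  calc |a| = |b + (a - b)| := by ring_nf
    _ ≤ |b| + |a - b| := abs_add_le _ _

lemma Nv_near (v w : Fin 2 → ℝ) : Nv v ≤ Nv w + Nv (v - w) := by
  have h : ∀ i : Fin 2, |v i| ≤ Nv w + Nv (v - w) := by
    intro i
    refine (abs_le_abs_add_abs_sub' (v i) (w i)).trans ?_
    refine add_le_add (comp_le_Nv _ _) ?_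
    have : v i - w i = (v - w) i := rfl
    rw [this]
    exact comp_le_Nv _ _
  exact max_le (h 0) (h 1)



/-- A bounded function `V : ℤ → ℝ` is a Gordon potential if there are positive
integers `q k → ∞` such that `max_{1 ≤ n ≤ q k} |V(n) - V(n ± q k)| ≤ k^(-q k)`
for every `k ≥ 1`. -/
def IsGordonPotential (V : ℤ → ℝ) : Prop :=
  (∃ C : ℝ, ∀ n : ℤ, |V n| ≤ C) ∧
  ∃ q : ℕ → ℕ, (∀ k, 1 ≤ q k) ∧ Tendsto q atTop atTop ∧
    ∀ k : ℕ, 1 ≤ k → ∀ n : ℤ, 1 ≤ n → n ≤ (q k : ℤ) →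
      |V n - V (n + (q k : ℤ))| ≤ (k : ℝ) ^ (-(q k : ℤ)) ∧
      |V n - V (n - (q k : ℤ))| ≤ (k : ℝ) ^ (-(q k : ℤ))

set_option maxHeartbeats 2000000 in
/-- If `V : ℤ → ℝ` is a Gordon potential, then the Schrödinger
operator `H` on `ℓ²(ℤ)` given by `[Hψ](n) = ψ(n+1) + ψ(n-1) + V(n)ψ(n)` has
empty point spectrum: there is no `E ∈ ℝ` and nonzero `ψ ∈ ℓ²(ℤ)` with
`Hψ = Eψ`. -/
theorem statement4
    (V : ℤ → ℝ) (hV : IsGordonPotential V)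
    (H : lp (fun _ : ℤ => ℝ) 2 →L[ℝ] lp (fun _ : ℤ => ℝ) 2)
    (hH : ∀ ψ : lp (fun _ : ℤ => ℝ) 2, ∀ n : ℤ,
        H ψ n = ψ (n + 1) + ψ (n - 1) + V n * ψ n) :
    ¬ ∃ (E : ℝ) (ψ : lp (fun _ : ℤ => ℝ) 2), ψ ≠ 0 ∧ H ψ = E • ψ := by
  rintro ⟨E, ψ, hψ0, hψE⟩
  obtain ⟨⟨C, hC⟩, q, hq1, hqT, hGordon⟩ := hV
  set x : ℤ → ℝ := fun n => ψ n with hxdef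
  have hrec : ∀ m : ℤ, x (m + 1) = (E - V m) * x m - x (m - 1) := by
    intro m
    have h1 := hH ψ m
    have h2 : H ψ m = E * ψ m := by
      rw [hψE, lp.coeFn_smul, Pi.smul_apply, smul_eq_mul]
    simp only [hxdef]
    nlinarith [h1, h2]
  set a : ℤ → ℝ := fun m => E - V m with hadef
  set u : ℤ → Fin 2 → ℝ := fun m => ![x (m + 1), x m] with hudef
  have hu : ∀ m : ℤ, u m = Amat (a m) *ᵥ u (m - 1) := by
    intro m
    rw [Amat_mulVec]
    simp only [hudef, Matrix.cons_val_zero, Matrix.cons_val_one, Matrix.head_cons,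
      sub_add_cancel]
    congr 1
    rw [hrec m]
  have hγ : 0 < Nv (u 0) := by
    rcases lt_or_ge 0 (Nv (u 0)) with h | h
    · exact h
    exfalso
    have h1 : x 1 = 0 ∧ x 0 = 0 := by
      have hN : Nv (u 0) = max |x 1| |x 0| := by
        simp [hudef, Nv]
      rw [hN] at h
      have e0 : |x 1| ≤ 0 := le_trans (le_max_left _ _) h
      have e1 : |x 0| ≤ 0 := le_trans (le_max_right _ _) h
      exact ⟨abs_eq_zero.mp (le_antisymm e0 (abs_nonneg _)),
        abs_eq_zero.mp (le_antisymm e1 (abs_nonneg _))⟩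
    have hzero : ∀ m : ℤ, x m = 0 ∧ x (m + 1) = 0 := by
      intro m
      induction m using Int.induction_on with
      | zero => exact ⟨h1.2, h1.1⟩
      | succ i ih =>
        refine ⟨ih.2, ?_⟩
        have h := hrec ((i : ℤ) + 1)
        rw [ih.2] at h
        simp only [add_sub_cancel_right] at h
        rw [h, ih.1]
        ring
      | pred i ih =>
        refine ⟨?_, by push_cast; simpa using ih.1⟩
        have h := hrec (-(i : ℤ))
        rw [ih.1, ih.2, mul_zero, zero_sub] at h
        push_cast
        linarith
    apply hψ0
    apply lp.ext
    funext m
    have := (hzero m).1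
    simpa [hxdef] using this
  set S : ℝ := ‖ψ‖ with hSdef
  have hS : ∀ m : ℤ, |x m| ≤ S := by
    intro m
    exact lp.norm_apply_le_norm (by norm_num) ψ m
  set R : ℝ := |E| + C + 1 with hRdef
  have hC0 : 0 ≤ C := le_trans (abs_nonneg _) (hC 0)
  have hR1 : 1 ≤ R := by have := abs_nonneg E; simp only [hRdef]; linarith
  have ha : ∀ m : ℤ, |a m| ≤ R := by
    intro m
    simp only [hadef, hRdef]
    calc |E - V m| ≤ |E| + |V m| := abs_sub _ _
      _ ≤ |E| + C + 1 := by have := hC m; linarith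
  have hmain : ∀ k : ℕ, 1 ≤ k →
      Nv (u 0) ≤ |x (((q k + q k : ℕ) : ℤ) + 1)| + |x ((q k + q k : ℕ) : ℤ)|
        + |x (((q k : ℕ) : ℤ) + 1)| + |x ((q k : ℕ) : ℤ)|
        + |x (-((q k : ℕ) : ℤ) + 1)| + |x (-((q k : ℕ) : ℤ))|
        + 8 * ((q k : ℝ) * (k : ℝ) ^ (-((q k : ℕ) : ℤ)) * (2 * R) ^ (q k + q k))
          * (Nv (u 0) + S) := by
    intro k hk
    set n : ℕ := q k with hndef
    have hn1 : 1 ≤ n := hq1 k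
    set qz : ℤ := (n : ℤ) with hqzdef
    have hqz1 : 1 ≤ qz := by rw [hqzdef]; exact_mod_cast hn1
    set ε : ℝ := (k : ℝ) ^ (-qz) with hεdef
    have hε0 : 0 ≤ ε := zpow_nonneg (Nat.cast_nonneg k) _
    set per : ℤ → ℝ := fun m => a (1 + (m - 1) % qz) with hperdef
    have hper_range : ∀ m : ℤ, 1 ≤ m → m ≤ qz → per m = a m := by
      intro m h1 h2
      simp only [hperdef]
      congr 1
      rw [Int.emod_eq_of_lt (by omega) (by omega)]
      omega
    have hper_sub : ∀ m : ℤ, per (m - qz) = per m := by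
      intro m
      simp only [hperdef]
      congr 2
      have e : m - qz - 1 = m - 1 + qz * (-1) := by ring
      rw [e, Int.add_mul_emod_self_left]
    have haper : ∀ m : ℤ, |per m| ≤ R := fun m => ha _
    have hGk := hGordon k hk
    set M : M2 := tmat per n with hMdef
    have hM : tmat a n = M := by
      apply tmat_congr
      intro m h1 h2
      exact (hper_range m (by exact_mod_cast h1) (by rw [hqzdef]; exact_mod_cast h2)).symm
    have hdet : M.det = 1 := det_tmat per n
    have hMM : tmat per (n + n) = M * M := by
      rw [tmat_add]
      congr 1
      rw [show (fun j : ℤ => per (j + qz)) = per from funext fun j => by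
        have h := hper_sub (j + qz)
        rw [add_sub_cancel_right] at h
        exact h.symm]
    have hbc_fwd : ∀ m : ℕ, 1 ≤ m → m ≤ n + n → |a m - per m| ≤ ε := by
      intro m h1 h2
      rcases le_or_gt (m : ℤ) qz with hle | hgt
      · rw [hper_range m (by exact_mod_cast h1) hle, sub_self, abs_zero]
        exact hε0
      · have h1' : 1 ≤ (m : ℤ) - qz := by omega
        have h2' : (m : ℤ) - qz ≤ qz := by
          have hcast : (m : ℤ) ≤ (n : ℤ) + (n : ℤ) := by exact_mod_cast h2
          omega
        have hper1 : per (m : ℤ) = a ((m : ℤ) - qz) := by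
          rw [← hper_sub (m : ℤ), hper_range _ h1' h2']
        have hg := (hGk ((m : ℤ) - qz) h1' h2').1
        rw [hper1]
        have e : a (m : ℤ) - a ((m : ℤ) - qz) = V ((m : ℤ) - qz) - V (m : ℤ) := by
          simp only [hadef]; ring
        rw [e]
        have e2 : (m : ℤ) - qz + qz = m := by ring
        rw [e2] at hg
        exact hg
    have hDfwd : Nm (tmat a (n + n) - M * M) ≤ 2 * ε * (n + n : ℕ) * (2 * R) ^ (n + n) := by
      rw [← hMM]
      exact tmat_sub_le hR1 hε0 (n + n) (fun m _ _ => ha _) (fun m _ _ => haper _) hbc_fwd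
    have hMQ : Nm (tmat (fun j => a (j - qz)) n - M) ≤ 2 * ε * n * (2 * R) ^ n := by
      have hM' : tmat (fun j : ℤ => per (j - qz)) n = M := by
        rw [show (fun j : ℤ => per (j - qz)) = per from funext fun j => hper_sub j]
      rw [← hM']
      refine tmat_sub_le hR1 hε0 n (fun m _ _ => ha _) (fun m _ _ => haper _) ?_
      intro m h1 h2
      have h1' : 1 ≤ (m : ℤ) := by exact_mod_cast h1
      have h2' : (m : ℤ) ≤ qz := by rw [hqzdef]; exact_mod_cast h2
      have hg := (hGk (m : ℤ) h1' h2').2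
      have e : a ((m : ℤ) - qz) - per ((m : ℤ) - qz) = V (m : ℤ) - V ((m : ℤ) - qz) := by
        rw [hper_sub, hper_range _ h1' h2']
        simp only [hadef]; ring
      rw [e]
      exact hg
    have hfa0 : (fun j : ℤ => a (j + 0)) = a := funext fun j => by rw [add_zero]
    have hsol1 : u qz = M *ᵥ u 0 := by
      have h := sol hu 0 n
      rw [hfa0, zero_add] at h
      rw [hqzdef, h, hM]
    have hsol2 : u ((qz : ℤ) + qz) = tmat a (n + n) *ᵥ u 0 := by
      have h := sol hu 0 (n + n)
      rw [hfa0, zero_add] at h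
      rw [hqzdef, show ((n:ℤ) + (n:ℤ)) = ((n + n : ℕ) : ℤ) from by push_cast; ring, h]
    have hsol3 : u 0 = tmat (fun j => a (j - qz)) n *ᵥ u (-qz) := by
      have h := sol hu (-qz) n
      rw [show (fun j : ℤ => a (j + -qz)) = fun j => a (j - qz) from
        funext fun j => by rw [sub_eq_add_neg]] at h
      rw [show -qz + (n : ℤ) = 0 from by rw [hqzdef]; ring] at h
      exact h
    set w : Fin 2 → ℝ := M.adjugate *ᵥ u 0 with hwdef
    have hMw : M *ᵥ w = u 0 := by
      rw [hwdef, Matrix.mulVec_mulVec, Matrix.mul_adjugate, hdet, one_smul, Matrix.one_mulVec]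
    have hch : M * M = M.trace • M - 1 := by
      rw [cayley M, hdet, one_smul]
    have hv1 : M *ᵥ u 0 = M.trace • u 0 - w := by
      conv_lhs => rw [← hMw]
      rw [Matrix.mulVec_mulVec, hch, Matrix.sub_mulVec, Matrix.smul_mulVec,
        Matrix.one_mulVec, hMw]
    have hv2 : (M * M) *ᵥ u 0 = M.trace • (M *ᵥ u 0) - u 0 := by
      rw [hch, Matrix.sub_mulVec, Matrix.smul_mulVec, Matrix.one_mulVec]
    have hkey : Nv (u 0) ≤ Nv ((M * M) *ᵥ u 0) + Nv (M *ᵥ u 0) + Nv w := by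
      rcases le_or_gt |M.trace| 1 with htr | htr
      · have hcomp : ∀ i : Fin 2, |u 0 i| ≤ Nv ((M * M) *ᵥ u 0) + Nv (M *ᵥ u 0) := by
          intro i
          have h : u 0 i = M.trace * (M *ᵥ u 0) i - ((M * M) *ᵥ u 0) i := by
            have hh := congrFun hv2 i
            simp only [Pi.sub_apply, Pi.smul_apply, smul_eq_mul] at hh
            linarith
          rw [h]
          calc |M.trace * (M *ᵥ u 0) i - ((M * M) *ᵥ u 0) i|
              ≤ |M.trace * (M *ᵥ u 0) i| + |((M * M) *ᵥ u 0) i| := abs_sub _ _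
            _ = |M.trace| * |(M *ᵥ u 0) i| + |((M * M) *ᵥ u 0) i| := by rw [abs_mul]
            _ ≤ 1 * Nv (M *ᵥ u 0) + Nv ((M * M) *ᵥ u 0) := by
                have c1 := comp_le_Nv (M *ᵥ u 0) i
                have c2 := comp_le_Nv ((M * M) *ᵥ u 0) i
                have hmm := mul_le_mul htr c1 (abs_nonneg _) zero_le_one
                linarith
            _ = Nv ((M * M) *ᵥ u 0) + Nv (M *ᵥ u 0) := by ring
        have := Nv_nonneg w
        have h2 := max_le (hcomp 0) (hcomp 1)
        have hNv : Nv (u 0) = max |u 0 0| |u 0 1| := rfl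
        rw [hNv]
        linarith
      · have hcomp : ∀ i : Fin 2, |u 0 i| ≤ Nv (M *ᵥ u 0) + Nv w := by
          intro i
          have h : M.trace * u 0 i = (M *ᵥ u 0) i + w i := by
            have hh := congrFun hv1 i
            simp only [Pi.sub_apply, Pi.smul_apply, smul_eq_mul] at hh
            linarith
          have h2 : |u 0 i| ≤ |M.trace| * |u 0 i| := by
            nlinarith [abs_nonneg (u 0 i)]
          calc |u 0 i| ≤ |M.trace| * |u 0 i| := h2
            _ = |M.trace * u 0 i| := (abs_mul _ _).symm
            _ = |(M *ᵥ u 0) i + w i| := by rw [h]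
            _ ≤ |(M *ᵥ u 0) i| + |w i| := abs_add_le _ _
            _ ≤ Nv (M *ᵥ u 0) + Nv w := add_le_add (comp_le_Nv _ _) (comp_le_Nv _ _)
        have := Nv_nonneg ((M * M) *ᵥ u 0)
        have h2 := max_le (hcomp 0) (hcomp 1)
        have hNv : Nv (u 0) = max |u 0 0| |u 0 1| := rfl
        rw [hNv]
        linarith
    have hNvu : ∀ m : ℤ, Nv (u m) = max |x (m + 1)| |x m| := by
      intro m
      simp [hudef, Nv]
    have hNmM : Nm M ≤ (2 * R) ^ n := by
      rw [hMdef]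
      exact Nm_tmat_le hR1 n fun m _ _ => haper _
    have h2Rpos : (0:ℝ) < 2 * R := by linarith
    have hpow_nonneg : ∀ j : ℕ, (0:ℝ) ≤ (2 * R) ^ j := fun j => le_of_lt (pow_pos h2Rpos j)
    -- forward 2n estimate
    have hcastnn : ((n + n : ℕ) : ℝ) = 2 * (n : ℝ) := by push_cast; ring
    have hNu2 : Nv ((M * M) *ᵥ u 0) ≤
        Nv (u (qz + qz)) + 8 * ((n : ℝ) * ε * (2 * R) ^ (n + n)) * Nv (u 0) := by
      refine (Nv_near _ (u (qz + qz))).trans ?_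
      refine add_le_add_right ?_ _
      have hdiff : (M * M) *ᵥ u 0 - u (qz + qz) = -((tmat a (n + n) - M * M) *ᵥ u 0) := by
        rw [hsol2, ← Matrix.sub_mulVec, ← Matrix.neg_mulVec, neg_sub]
      rw [hdiff]
      have hNvneg : Nv (-((tmat a (n + n) - M * M) *ᵥ u 0)) =
          Nv ((tmat a (n + n) - M * M) *ᵥ u 0) := by
        unfold Nv; simp only [Pi.neg_apply, abs_neg]
      rw [hNvneg]
      refine (Nv_mulVec_le _ _).trans ?_
      have := Nv_nonneg (u 0)
      rw [hcastnn] at hDfwd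
      nlinarith [hDfwd, Nm_nonneg (tmat a (n + n) - M * M)]
    -- backward estimate
    have hvS : ∀ m : ℤ, Nv (u m) ≤ S := by
      intro m
      rw [hNvu]
      exact max_le (hS _) (hS _)
    have hS0 : 0 ≤ S := le_trans (abs_nonneg _) (hS 0)
    have hNw : Nv w ≤ Nv (u (-qz)) + 8 * ε * n * (2 * R) ^ (n + n) * S := by
      refine (Nv_near _ (u (-qz))).trans ?_
      refine add_le_add_right ?_ _
      have hw2 : w - u (-qz) = (M.adjugate * (tmat (fun j => a (j - qz)) n - M)) *ᵥ u (-qz) := by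
        rw [hwdef, hsol3, Matrix.mulVec_mulVec, Matrix.mul_sub, Matrix.adjugate_mul, hdet,
          one_smul, Matrix.sub_mulVec]
        congr 1
        rw [Matrix.one_mulVec]
      rw [hw2]
      refine (Nv_mulVec_le _ _).trans ?_
      have hprod : Nm (M.adjugate * (tmat (fun j => a (j - qz)) n - M)) ≤
          2 * (2 * R) ^ n * (2 * ε * n * (2 * R) ^ n) := by
        refine (Nm_mul_le _ _).trans ?_
        have h1 : Nm M.adjugate ≤ (2 * R) ^ n := (Nm_adjugate M).trans hNmM
        nlinarith [Nm_nonneg M.adjugate, Nm_nonneg (tmat (fun j => a (j - qz)) n - M),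
          hMQ, hpow_nonneg n]
      have hvv := hvS (-qz)
      have hvv0 := Nv_nonneg (u (-qz))
      have e : 2 * (2 * (2 * R) ^ n * (2 * ε * n * (2 * R) ^ n)) * S =
          8 * ε * n * (2 * R) ^ (n + n) * S := by
        rw [pow_add]; ring
      calc 2 * Nm (M.adjugate * (tmat (fun j => a (j - qz)) n - M)) * Nv (u (-qz))
          ≤ 2 * (2 * (2 * R) ^ n * (2 * ε * n * (2 * R) ^ n)) * S := by
            nlinarith [Nm_nonneg (M.adjugate * (tmat (fun j => a (j - qz)) n - M)),
              hpow_nonneg n,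
              mul_nonneg (mul_nonneg (mul_nonneg (by norm_num : (0:ℝ) ≤ 2) hε0)
                (Nat.cast_nonneg n : (0:ℝ) ≤ n)) (hpow_nonneg n)]
        _ = 8 * ε * n * (2 * R) ^ (n + n) * S := e
    -- assemble
    have hsum1 : Nv (u (qz + qz)) ≤ |x (qz + qz + 1)| + |x (qz + qz)| := by
      rw [hNvu]
      exact max_le (le_add_of_nonneg_right (abs_nonneg _))
        (le_add_of_nonneg_left (abs_nonneg _))
    have hsum2 : Nv (u qz) ≤ |x (qz + 1)| + |x qz| := by
      rw [hNvu]
      exact max_le (le_add_of_nonneg_right (abs_nonneg _))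
        (le_add_of_nonneg_left (abs_nonneg _))
    have hsum3 : Nv (u (-qz)) ≤ |x (-qz + 1)| + |x (-qz)| := by
      rw [hNvu]
      exact max_le (le_add_of_nonneg_right (abs_nonneg _))
        (le_add_of_nonneg_left (abs_nonneg _))
    have hfinal : Nv (u 0) ≤ |x (qz + qz + 1)| + |x (qz + qz)| + (|x (qz + 1)| + |x qz|)
        + (|x (-qz + 1)| + |x (-qz)|)
        + 8 * ((n : ℝ) * ε * (2 * R) ^ (n + n)) * (Nv (u 0) + S) := by
      have e2 : 8 * ε * (n:ℝ) * (2 * R) ^ (n + n) * S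
          = 8 * ((n : ℝ) * ε * (2 * R) ^ (n + n)) * S := by ring
      rw [← hsol1] at hkey
      linarith [hkey, hNu2, hNw, hsum1, hsum2, hsum3]
    -- match the required form
    have ecast1 : ((n + n : ℕ) : ℤ) = qz + qz := by rw [hqzdef]; push_cast; ring
    rw [ecast1]
    linarith [hfinal]
  -- limit part
  have hS0 : 0 ≤ S := norm_nonneg _
  have hsum : Summable fun m : ℤ => ‖x m‖ ^ (2 : ENNReal).toReal :=
    (lp.memℓp ψ).summable (by norm_num)
  have htends : Tendsto x cofinite (nhds 0) := by
    rw [tendsto_zero_iff_norm_tendsto_zero]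
    have h0 := hsum.tendsto_cofinite_zero
    have heq : (fun m : ℤ => ‖x m‖) = fun m => (‖x m‖ ^ (2 : ENNReal).toReal) ^ ((1:ℝ)/2) := by
      funext m
      rw [← Real.rpow_mul (norm_nonneg _)]
      norm_num
    rw [heq]
    have h2 := h0.rpow_const (Or.inr (by norm_num : (0:ℝ) ≤ 1/2))
    simpa [Real.zero_rpow] using h2
  have habs : ∀ f : ℕ → ℤ, Tendsto f atTop cofinite →
      Tendsto (fun k => |x (f k)|) atTop (nhds 0) := by
    intro f hf
    have h := (htends.comp hf).abs
    simpa using h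
  have hcofT : ∀ {f : ℕ → ℤ}, Tendsto f atTop atTop → Tendsto f atTop cofinite := by
    intro f hf
    rw [Int.cofinite_eq]
    exact hf.mono_right le_sup_right
  have hcofB : ∀ {f : ℕ → ℤ}, Tendsto f atTop atBot → Tendsto f atTop cofinite := by
    intro f hf
    rw [Int.cofinite_eq]
    exact hf.mono_right le_sup_left
  have hqZ : Tendsto (fun k => ((q k : ℕ) : ℤ)) atTop atTop :=
    tendsto_natCast_atTop_atTop.comp hqT
  have hqZ2 : Tendsto (fun k => ((q k + q k : ℕ) : ℤ)) atTop atTop := by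
    apply tendsto_atTop_mono (fun k => ?_) hqZ
    push_cast
    omega
  have hqZneg : Tendsto (fun k => -((q k : ℕ) : ℤ)) atTop atBot := by
    have h := tendsto_neg_atTop_atBot.comp hqZ
    exact h
  have t1 := habs _ (hcofT (tendsto_atTop_add_const_right _ 1 hqZ2))
  have t2 := habs _ (hcofT hqZ2)
  have t3 := habs _ (hcofT (tendsto_atTop_add_const_right _ 1 hqZ))
  have t4 := habs _ (hcofT hqZ)
  have t5 := habs _ (hcofB (tendsto_atBot_add_const_right _ 1 hqZneg))
  have t6 := habs _ (hcofB hqZneg)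
  -- the error term tends to zero
  have hc : Tendsto (fun k => (q k : ℝ) * (k : ℝ) ^ (-((q k : ℕ) : ℤ))
      * (2 * R) ^ (q k + q k)) atTop (nhds 0) := by
    have hd : Tendsto (fun j : ℕ => (j : ℝ) * (1/2 : ℝ) ^ j) atTop (nhds 0) :=
      tendsto_self_mul_const_pow_of_lt_one (by norm_num) (by norm_num)
    have hdq : Tendsto (fun k => ((q k : ℝ)) * (1/2 : ℝ) ^ (q k)) atTop (nhds 0) := by
      have h := hd.comp hqT
      simpa [Function.comp_def] using h
    apply squeeze_zero' ?_ ?_ hdq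
    · filter_upwards with k
      have h1 : (0:ℝ) ≤ (k : ℝ) := Nat.cast_nonneg k
      positivity
    · refine eventually_atTop.2 ⟨max 1 (⌈2 * (2*R)^2⌉₊), fun k hk => ?_⟩
      have hk1 : 1 ≤ k := le_trans (le_max_left _ _) hk
      have hkR : 2 * (2*R)^2 ≤ (k:ℝ) := by
        have h1 : ((⌈2 * (2*R)^2⌉₊ : ℕ) : ℝ) ≤ (k : ℝ) := by
          exact_mod_cast le_trans (le_max_right _ _) hk
        exact (Nat.le_ceil _).trans h1
      have hkpos : (0:ℝ) < (k:ℝ) := by exact_mod_cast hk1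
      have e1 : (k:ℝ) ^ (-((q k : ℕ) : ℤ)) = ((k:ℝ) ^ (q k))⁻¹ := by
        rw [_root_.zpow_neg, zpow_natCast]
      have e2 : (2*R)^(q k + q k) = ((2*R)^2)^(q k) := by
        rw [show q k + q k = 2 * q k from by ring, pow_mul]
      rw [e1, e2]
      have e3 : (q k : ℝ) * ((k:ℝ) ^ (q k))⁻¹ * ((2*R)^2)^(q k)
          = (q k : ℝ) * ((2*R)^2 / (k:ℝ))^(q k) := by
        rw [div_pow]
        field_simp
      rw [e3]
      have hbase0 : (0:ℝ) ≤ (2*R)^2 / (k:ℝ) := by positivity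
      have hbase : (2*R)^2 / (k:ℝ) ≤ 1/2 := by
        rw [div_le_div_iff₀ hkpos (by norm_num : (0:ℝ) < 2)]
        linarith
      have hq0 : (0:ℝ) ≤ (q k : ℝ) := Nat.cast_nonneg _
      have hpow := pow_le_pow_left₀ hbase0 hbase (q k)
      nlinarith [hpow, hq0]
  have herr : Tendsto (fun k => 8 * ((q k : ℝ) * (k : ℝ) ^ (-((q k : ℕ) : ℤ))
      * (2 * R) ^ (q k + q k)) * (Nv (u 0) + S)) atTop (nhds 0) := by
    have h := (hc.const_mul (8:ℝ)).mul_const (Nv (u 0) + S)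
    simpa using h
  have hF : Tendsto (fun k => |x (((q k + q k : ℕ) : ℤ) + 1)| + |x ((q k + q k : ℕ) : ℤ)|
      + |x (((q k : ℕ) : ℤ) + 1)| + |x ((q k : ℕ) : ℤ)|
      + |x (-((q k : ℕ) : ℤ) + 1)| + |x (-((q k : ℕ) : ℤ))|
      + 8 * ((q k : ℝ) * (k : ℝ) ^ (-((q k : ℕ) : ℤ)) * (2 * R) ^ (q k + q k))
        * (Nv (u 0) + S)) atTop (nhds 0) := by
    have h := (((((t1.add t2).add t3).add t4).add t5).add t6).add herr
    simpa using h
  have hev : ∀ᶠ k in atTop, Nv (u 0) ≤ _ := eventually_atTop.2 ⟨1, fun k hk => hmain k hk⟩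
  have hle : Nv (u 0) ≤ 0 := ge_of_tendsto hF hev
  linarith
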